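/- Define F : ℝ × ℝ → ℝ × ℝ by F(t, r) = (s(t,r), β(t,r)), where s(t,r) ≥ 0 is the unique nonnegative real with cosh(s(t,r)) = cosh r · cosh t, and β(t,r) = arcsin( sinh r / sinh(s(t,r)) ). Then for every t ≠ 0 and r > 0, F is differentiable at (t, r), and its total derivative DF(t,r) satisfies: for every vector v = (v₁, v₂) ∈ ℝ², sinh(s(t,r))² · ( second component of DF(t,r)(v) )² + ( first component of DF(t,r)(v) )² = cosh(r)² · v₁² + v₂². -/

import Mathlib

set_option maxHeartbeats 1000000


/-- The hypotenuse `s(t, r)`: the unique nonnegative real with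
`cosh (polarS t r) = cosh r * cosh t` (see `polarS_nonneg` and `cosh_polarS`). -/
noncomputable def polarS (t r : ℝ) : ℝ :=
  Real.arsinh (Real.sqrt ((Real.cosh r * Real.cosh t) ^ 2 - 1))

theorem polarS_nonneg (t r : ℝ) : 0 ≤ polarS t r :=
  Real.arsinh_nonneg_iff.mpr (Real.sqrt_nonneg _)

theorem cosh_polarS (t r : ℝ) : Real.cosh (polarS t r) = Real.cosh r * Real.cosh t := by
  have h1 : (1 : ℝ) ≤ Real.cosh r * Real.cosh t := by
    nlinarith [Real.one_le_cosh r, Real.one_le_cosh t]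
  have h2 : (0 : ℝ) ≤ (Real.cosh r * Real.cosh t) ^ 2 - 1 := by nlinarith
  rw [polarS, Real.cosh_arsinh, Real.sq_sqrt h2]
  rw [show (1 : ℝ) + ((Real.cosh r * Real.cosh t) ^ 2 - 1)
      = (Real.cosh r * Real.cosh t) ^ 2 by ring]
  exact Real.sqrt_sq (by linarith)

/-- The angle `β(t, r) = arcsin (sinh r / sinh (s(t, r)))`. -/
noncomputable def polarBeta (t r : ℝ) : ℝ :=
  Real.arcsin (Real.sinh r / Real.sinh (polarS t r))

/-- The change of coordinates `F(t, r) = (s(t, r), β(t, r))` from Fermi coordinates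
to polar coordinates of the hyperbolic plane. -/
noncomputable def fermiToPolar (p : ℝ × ℝ) : ℝ × ℝ :=
  (polarS p.1 p.2, polarBeta p.1 p.2)

/-- For every `t ≠ 0` and `r > 0`, `F = fermiToPolar` is differentiable at `(t, r)`,
and its total derivative satisfies: for every `v = (v₁, v₂)`,
`sinh (s(t,r))² * (DF(t,r)(v))₂² + (DF(t,r)(v))₁² = cosh(r)² * v₁² + v₂²`;
i.e. the pullback under `F` of `sinh² s dβ² + ds²` equals `cosh² r dt² + dr²`. -/
theorem fermiToPolar_differentiableAt_and_isometry (t r : ℝ) (ht : t ≠ 0) (hr : 0 < r) :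
    DifferentiableAt ℝ fermiToPolar (t, r) ∧
      ∀ v : ℝ × ℝ,
        Real.sinh ((fermiToPolar (t, r)).1) ^ 2 * (fderiv ℝ fermiToPolar (t, r) v).2 ^ 2
            + (fderiv ℝ fermiToPolar (t, r) v).1 ^ 2
          = Real.cosh r ^ 2 * v.1 ^ 2 + v.2 ^ 2 := by
  have hFeq : fermiToPolar = fun p : ℝ × ℝ =>
      (Real.arsinh (Real.sqrt ((Real.cosh p.2 * Real.cosh p.1) ^ 2 - 1)),
       Real.arcsin (Real.sinh p.2 * (Real.sqrt ((Real.cosh p.2 * Real.cosh p.1) ^ 2 - 1))⁻¹)) := by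
    funext p
    simp only [fermiToPolar, polarS, polarBeta, Real.sinh_arsinh, div_eq_mul_inv]
  have hct : 1 < Real.cosh t := Real.one_lt_cosh.mpr ht
  have hcr : 1 < Real.cosh r := Real.one_lt_cosh.mpr hr.ne'
  have hc : 1 < Real.cosh r * Real.cosh t := by nlinarith
  have hX : 0 < (Real.cosh r * Real.cosh t) ^ 2 - 1 := by nlinarith
  set S := Real.sqrt ((Real.cosh r * Real.cosh t) ^ 2 - 1) with hSdef
  have hS2 : S ^ 2 = (Real.cosh r * Real.cosh t) ^ 2 - 1 := Real.sq_sqrt hX.le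
  have hS : 0 < S := Real.sqrt_pos.mpr hX
  have hsr : 0 < Real.sinh r := Real.sinh_pos_iff.mpr hr
  have hstne : Real.sinh t ≠ 0 := Real.sinh_ne_zero.mpr ht
  have hst2 : 0 < Real.sinh t ^ 2 := lt_of_le_of_ne (sq_nonneg _) (Ne.symm (pow_ne_zero 2 hstne))
  have hchr2 : Real.cosh r ^ 2 - Real.sinh r ^ 2 = 1 := Real.cosh_sq_sub_sinh_sq r
  have hcht2 : Real.cosh t ^ 2 - Real.sinh t ^ 2 = 1 := Real.cosh_sq_sub_sinh_sq t
  have hsrS : Real.sinh r < S := by nlinarith [Real.cosh_pos (x := r)]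
  have hu1 : Real.sinh r * S⁻¹ ≠ 1 := by
    intro h
    rw [← div_eq_mul_inv, div_eq_one_iff_eq hS.ne'] at h; linarith
  have hu1' : Real.sinh r * S⁻¹ ≠ -1 := by
    have : 0 < Real.sinh r * S⁻¹ := by positivity
    linarith
  -- simplification of the sqrt values appearing in derivatives
  have hA : Real.sqrt (1 + S ^ 2) = Real.cosh r * Real.cosh t := by
    rw [hS2, show (1 : ℝ) + ((Real.cosh r * Real.cosh t) ^ 2 - 1)
        = (Real.cosh r * Real.cosh t) ^ 2 by ring]
    exact Real.sqrt_sq (by positivity)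
  have hQ : Real.sqrt (1 - (Real.sinh r * S⁻¹) ^ 2) = Real.cosh r * |Real.sinh t| * S⁻¹ := by
    rw [show (1 : ℝ) - (Real.sinh r * S⁻¹) ^ 2 = (Real.cosh r * |Real.sinh t| * S⁻¹) ^ 2 by
      rw [mul_pow, mul_pow, mul_pow, sq_abs, inv_pow]
      field_simp
      nlinarith]
    exact Real.sqrt_sq (by positivity)
  -- derivatives
  have hG := HasFDerivAt.mul
    ((hasFDerivAt_snd (𝕜 := ℝ) (E := ℝ) (F := ℝ) (p := (t, r))).cosh)
    ((hasFDerivAt_fst (𝕜 := ℝ) (E := ℝ) (F := ℝ) (p := (t, r))).cosh)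
  have hGX := (hG.mul hG).sub_const 1
  simp only [Pi.mul_apply] at hGX
  rw [show (fun y : ℝ × ℝ => (Real.cosh y.2 * Real.cosh y.1) * (Real.cosh y.2 * Real.cosh y.1) - 1)
      = fun y : ℝ × ℝ => (Real.cosh y.2 * Real.cosh y.1) ^ 2 - 1 from funext fun y => by ring]
    at hGX
  have hSf := hGX.sqrt (by simpa using hX.ne')
  have hs := hSf.arsinh
  have hinv := (hasDerivAt_inv (by simpa using hS.ne')).comp_hasFDerivAt (t, r) hSf
  have hquot := ((hasFDerivAt_snd (𝕜 := ℝ) (p := (t, r)) (E := ℝ) (F := ℝ)).sinh).mul hinv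
  have hβ := (Real.hasDerivAt_arcsin hu1' hu1).comp_hasFDerivAt (t, r) (by simpa using hquot)
  simp only [Function.comp_def, Pi.mul_apply] at hβ
  have hF := HasFDerivAt.prodMk hs hβ
  rw [hFeq]
  refine ⟨hF.differentiableAt, fun v => ?_⟩
  rw [hF.fderiv]
  simp only [ContinuousLinearMap.prod_apply, ContinuousLinearMap.smul_apply,
    ContinuousLinearMap.add_apply, ContinuousLinearMap.sub_apply,
    ContinuousLinearMap.coe_smul', Pi.smul_apply, ContinuousLinearMap.coe_fst',
    ContinuousLinearMap.coe_snd', smul_eq_mul, Real.sinh_arsinh,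
    ContinuousLinearMap.neg_apply, ContinuousLinearMap.coe_neg', Pi.neg_apply,
    ContinuousLinearMap.coe_add', Pi.add_apply]
  rw [← hSdef, hQ, hA]
  have ha : 0 < |Real.sinh t| := abs_pos.mpr hstne
  have ha2 : |Real.sinh t| ^ 2 = Real.sinh t ^ 2 := sq_abs _
  set a := |Real.sinh t| with hadef
  set cr := Real.cosh r; set ct := Real.cosh t; set sr := Real.sinh r; set st := Real.sinh t
  have hcrp : 0 < cr := by positivity
  have hctp : 0 < ct := by positivity
  field_simp
  rw [ha2, hS2]
  linear_combination (4 * ((cr * st * v.1 + sr * ct * v.2) ^ 2 - ((cr * ct) ^ 2 - 1) * v.2 ^ 2)) * (-ct ^ 2 * hchr2 - hcht2)
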